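/- Let d ≥ 1, Ω ∈ ℝ, H : ℝᵈ → ℝ continuously differentiable, and K⁻¹ : ℝᵈ → Matrix (Fin d) (Fin d) ℝ continuous. Let H̄ = Σ_{i=1}^d H_i + Ω·H_c be the augmented Hamiltonian on (ℝᵈ)ᵈ built from the mixed Hamiltonians H_i (each taking exactly one coordinate from each copy, via the cyclic assignment σ(i,j) ≡ d + j - i mod d) and the constraint H_c = Σ_{1≤i<j≤d} ‖P_i - P_j‖²/2. If P : ℝ → ℝᵈ is differentiable on an interval I and solves P'(t) = K⁻¹(P(t))·∇H(P(t)) on I, then the diagonal curve (P₁,…,P_d) := (P,…,P) solves the extended system P_k'(t) = K⁻¹(P_k(t)) · ∇_{P_k} H̄(P₁(t),…,P_d(t)) for every k ∈ {1,…,d} on I. -/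

import Mathlib

open Matrix
open scoped BigOperators

/-- The i-th mixed Hamiltonian H_i(P₁,…,P_d) := H(x₁,…,x_d) where x_j := p_{σ(i,j),j}
and σ(i,j) is the unique index congruent to d + j - i modulo d (in 0-based indexing on
`Fin d` this is just j - i computed modulo d). -/
noncomputable def mixedHam (d : ℕ) (H : (Fin d → ℝ) → ℝ)
    (i : Fin d) (Z : Fin d → Fin d → ℝ) : ℝ :=
  H (fun j => Z (j - i) j)

/-- The constraint H_c := Σ_{i<j} ‖P_i - P_j‖₂²/2 (Euclidean 2-norm). -/
noncomputable def constraintHam (d : ℕ) (Z : Fin d → Fin d → ℝ) : ℝ :=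
  ∑ i : Fin d, ∑ j : Fin d,
    if i < j then (∑ l : Fin d, (Z i l - Z j l) ^ 2) / 2 else 0

/-- The augmented Hamiltonian H̄ := Σ_i H_i + Ω·H_c. -/
noncomputable def augHam (d : ℕ) (Ω : ℝ) (H : (Fin d → ℝ) → ℝ)
    (Z : Fin d → Fin d → ℝ) : ℝ :=
  (∑ i : Fin d, mixedHam d H i Z) + Ω * constraintHam d Z

/-- Gradient of H, expressed coordinatewise via partial derivatives. -/
noncomputable def gradVec (d : ℕ) (H : (Fin d → ℝ) → ℝ) (z : Fin d → ℝ) : Fin d → ℝ :=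
  fun j => fderiv ℝ H z (Pi.single j 1)

-- AUX
noncomputable def pickL (d : ℕ) [NeZero d] (i : Fin d) :
    (Fin d → Fin d → ℝ) →L[ℝ] (Fin d → ℝ) :=
  ContinuousLinearMap.pi fun j =>
    (ContinuousLinearMap.proj (R := ℝ) (φ := fun _ : Fin d => ℝ) j).comp
      (ContinuousLinearMap.proj (R := ℝ) (φ := fun _ : Fin d => Fin d → ℝ) (j - i))

lemma pickL_single (d : ℕ) [NeZero d] (i k j : Fin d) :
    pickL d i (Pi.single k (Pi.single j (1:ℝ))) =
      if i = j - k then Pi.single j (1:ℝ) else 0 := by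
  have key : ∀ j' : Fin d, j' - (j - k) = k ↔ j' = j := by
    intro j'
    rw [sub_eq_iff_eq_add, show k + (j - k) = j from by abel]
  funext j'
  simp only [pickL, ContinuousLinearMap.pi_apply, ContinuousLinearMap.comp_apply,
    ContinuousLinearMap.proj_apply, Pi.single_apply]
  rcases eq_or_ne i (j - k) with rfl | h
  · simp only [if_pos rfl, key j']
    rcases eq_or_ne j' j with rfl | hj
    · simp
    · simp [hj]
  · simp only [if_neg h]
    have : j' - i = k → j' ≠ j := by
      intro hc hj; apply h; rw [← hc, hj]; abel
    rcases eq_or_ne (j' - i) k with he | he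
    · simp [he, this he]
    · simp [he]

lemma hasFDerivAt_constraint_diag (d : ℕ) (z : Fin d → ℝ) :
    HasFDerivAt (constraintHam d) (0 : (Fin d → Fin d → ℝ) →L[ℝ] ℝ) (fun _ => z) := by
  have h : ∀ i j : Fin d,
      HasFDerivAt (fun Z : Fin d → Fin d → ℝ =>
        if i < j then (∑ l : Fin d, (Z i l - Z j l) ^ 2) / 2 else 0)
        (0 : (Fin d → Fin d → ℝ) →L[ℝ] ℝ) (fun _ => z) := by
    intro i j
    by_cases hij : i < j
    · simp only [if_pos hij]
      have hl : ∀ l : Fin d, HasFDerivAt (fun Z : Fin d → Fin d → ℝ => (Z i l - Z j l) ^ 2)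
          (0 : (Fin d → Fin d → ℝ) →L[ℝ] ℝ) (fun _ => z) := by
        intro l
        set e : (Fin d → Fin d → ℝ) →L[ℝ] ℝ :=
          (ContinuousLinearMap.proj (R := ℝ) (φ := fun _ : Fin d => ℝ) l).comp
            (ContinuousLinearMap.proj (R := ℝ) (φ := fun _ : Fin d => Fin d → ℝ) i) -
          (ContinuousLinearMap.proj (R := ℝ) (φ := fun _ : Fin d => ℝ) l).comp
            (ContinuousLinearMap.proj (R := ℝ) (φ := fun _ : Fin d => Fin d → ℝ) j) with he
        have h1 : HasFDerivAt (fun Z : Fin d → Fin d → ℝ => Z i l - Z j l) e (fun _ => z) :=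
          e.hasFDerivAt
        have h2 := h1.fun_mul h1
        have h0 : z l - z l = 0 := sub_self _
        simpa [sq, h0] using h2
      have hsum := HasFDerivAt.fun_sum (fun l (_ : l ∈ Finset.univ) => hl l)
      have := hsum.fun_const_smul (2:ℝ)⁻¹
      simpa [div_eq_inv_mul, smul_eq_mul] using this
    · simp only [if_neg hij]
      exact hasFDerivAt_const 0 _
  have := HasFDerivAt.fun_sum (fun i (_ : i ∈ Finset.univ) =>
    HasFDerivAt.fun_sum (fun j (_ : j ∈ Finset.univ) => h i j))
  simp only [Finset.sum_const_zero] at this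
  exact this

lemma hasFDerivAt_mixed_diag (d : ℕ) [NeZero d] (H : (Fin d → ℝ) → ℝ)
    (hH : ContDiff ℝ 1 H) (i : Fin d) (z : Fin d → ℝ) :
    HasFDerivAt (mixedHam d H i) ((fderiv ℝ H z).comp (pickL d i)) (fun _ => z) := by
  have h1 : HasFDerivAt H (fderiv ℝ H z) (pickL d i fun _ => z) :=
    (hH.differentiable one_ne_zero z).hasFDerivAt
  exact h1.comp _ (pickL d i).hasFDerivAt

lemma fderiv_augHam_diag (d : ℕ) [NeZero d] (Ω : ℝ) (H : (Fin d → ℝ) → ℝ)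
    (hH : ContDiff ℝ 1 H) (z : Fin d → ℝ) (k j : Fin d) :
    fderiv ℝ (augHam d Ω H) (fun _ => z) (Pi.single k (Pi.single j 1)) =
      fderiv ℝ H z (Pi.single j 1) := by
  have hsum : HasFDerivAt (fun Z => ∑ i : Fin d, mixedHam d H i Z)
      (∑ i : Fin d, (fderiv ℝ H z).comp (pickL d i)) (fun _ => z) :=
    HasFDerivAt.fun_sum (fun i (_ : i ∈ Finset.univ) => hasFDerivAt_mixed_diag d H hH i z)
  have hc := (hasFDerivAt_constraint_diag d z).const_mul Ω
  have ha : HasFDerivAt (augHam d Ω H)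
      (∑ i : Fin d, (fderiv ℝ H z).comp (pickL d i)) (fun _ => z) := by
    have := hsum.fun_add hc
    simp only [smul_zero, add_zero] at this
    exact this
  rw [ha.fderiv]
  simp only [ContinuousLinearMap.sum_apply, ContinuousLinearMap.comp_apply, pickL_single]
  simp [apply_ite (fderiv ℝ H z)]

/-- If P solves the original system P' = K⁻¹(P)·∇H(P) on an interval I, then the diagonal
curve (P,…,P) solves the extended system P_k' = K⁻¹(P_k)·∇_{P_k}H̄(P₁,…,P_d) for every k. -/
theorem diagonal_solves_extended_system
    (d : ℕ) [NeZero d] (Ω : ℝ)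
    (H : (Fin d → ℝ) → ℝ) (hH : ContDiff ℝ 1 H)
    (Kinv : (Fin d → ℝ) → Matrix (Fin d) (Fin d) ℝ) (hK : Continuous Kinv)
    (I : Set ℝ) (hI : I.OrdConnected)
    (P : ℝ → Fin d → ℝ)
    (hP : ∀ t ∈ I, HasDerivWithinAt P ((Kinv (P t)).mulVec (gradVec d H (P t))) I t) :
    ∀ k : Fin d, ∀ t ∈ I,
      HasDerivWithinAt P
        ((Kinv (P t)).mulVec
          (fun j => fderiv ℝ (augHam d Ω H) (fun _ => P t) (Pi.single k (Pi.single j 1))))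
        I t := by
  intro k t ht
  have hv : (fun j => fderiv ℝ (augHam d Ω H) (fun _ => P t) (Pi.single k (Pi.single j 1)))
      = gradVec d H (P t) :=
    funext fun j => fderiv_augHam_diag d Ω H hH (P t) k j
  rw [hv]
  exact hP t ht
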